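/- Let M be an infinite metric space with base point e. Then lip₀(M), as a subset of C_e(M) = {f ∈ C(M) : f(e)=0}, is not closed in the topology of pointwise convergence; equivalently, there exists a continuous function f on M with f(e)=0 that is not Lipschitz but is a pointwise limit of a net (or filter) of Lipschitz functions vanishing at e. -/

import Mathlib

open Set Metric

lemma finite_lipschitzOnWith {M : Type*} [MetricSpace M] (f : M → ℝ) (s : Set M)
    (hs : s.Finite) : ∃ K : NNReal, LipschitzOnWith K f s := by
  have hR : ((fun p : M × M => dist (f p.1) (f p.2) / dist p.1 p.2) '' (s ×ˢ s)).Finite :=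
    ((hs.prod hs).image _)
  obtain ⟨C, hC⟩ := hR.bddAbove
  refine ⟨Real.toNNReal C, LipschitzOnWith.of_dist_le_mul fun x hx y hy => ?_⟩
  by_cases hxy : x = y
  · simp [hxy]
  · have hd : (0:ℝ) < dist x y := dist_pos.2 hxy
    have hmem : dist (f x) (f y) / dist x y ≤ C := hC ⟨(x, y), ⟨hx, hy⟩, rfl⟩
    have h2 : dist (f x) (f y) / dist x y ≤ (Real.toNNReal C : ℝ) := by
      rw [Real.coe_toNNReal']
      exact hmem.trans (le_max_left _ _)
    calc dist (f x) (f y) = (dist (f x) (f y) / dist x y) * dist x y := by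
          field_simp
      _ ≤ (Real.toNNReal C : ℝ) * dist x y := mul_le_mul_of_nonneg_right h2 hd.le

lemma mem_closure_of_eq_zero {M : Type*} [MetricSpace M] (e : M) (f : M → ℝ) (hf : f e = 0) :
    f ∈ closure {g : M → ℝ | (∃ K : NNReal, LipschitzWith K g) ∧ g e = 0} := by
  rw [mem_closure_iff_nhds]
  intro U hU
  rw [nhds_pi] at hU
  obtain ⟨I, hI, t, ht, hsub⟩ := Filter.mem_pi.1 hU
  obtain ⟨K, hK⟩ := finite_lipschitzOnWith f (insert e I) (hI.insert e)
  obtain ⟨g, hg, heq⟩ := hK.extend_real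
  refine ⟨g, hsub ?_, ⟨K, hg⟩, ?_⟩
  · intro i hi
    rw [← heq (mem_insert_of_mem _ hi)]
    exact mem_of_mem_nhds (ht i)
  · rw [← heq (mem_insert _ _), hf]

lemma caseA {M : Type*} [MetricSpace M] (e a : M) (ha : ¬ IsOpen ({a} : Set M)) :
    ∃ f : M → ℝ, Continuous f ∧ f e = 0 ∧ (¬ ∃ K : NNReal, LipschitzWith K f) := by
  refine ⟨fun x => Real.sqrt (dist x a) - Real.sqrt (dist e a), by fun_prop, by simp, ?_⟩
  rintro ⟨K, hK⟩
  rw [Metric.isOpen_iff] at ha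
  push_neg at ha
  obtain ⟨b, hb, hball⟩ := ha
  rw [mem_singleton_iff] at hb
  subst hb
  obtain ⟨x, hx1, hx2⟩ := not_subset.1 (hball (1 / ((K:ℝ) + 1)^2) (by positivity))
  rw [mem_ball] at hx1
  rw [mem_singleton_iff] at hx2
  have hd : (0:ℝ) < dist x b := dist_pos.2 hx2
  have h := hK.dist_le_mul x b
  simp only [dist_self, Real.sqrt_zero, zero_sub] at h
  have h' : dist (Real.sqrt (dist x b) - Real.sqrt (dist e b))
      (-Real.sqrt (dist e b)) = Real.sqrt (dist x b) := by
    rw [Real.dist_eq]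
    ring_nf
    exact abs_of_nonneg (Real.sqrt_nonneg _)
  rw [h'] at h
  set s := Real.sqrt (dist x b) with hs_def
  have hs : 0 < s := Real.sqrt_pos.2 hd
  have hsq : s ^ 2 = dist x b := Real.sq_sqrt hd.le
  have hKnn : (0:ℝ) ≤ (K:ℝ) := K.coe_nonneg
  have h1 : (1:ℝ) ≤ (K:ℝ) * s := by nlinarith
  have hh : s ^ 2 * ((K:ℝ) + 1) ^ 2 < 1 := by
    have hc : (0:ℝ) < ((K:ℝ) + 1) ^ 2 := by positivity
    calc s ^ 2 * ((K:ℝ) + 1) ^ 2 < (1 / ((K:ℝ) + 1) ^ 2) * ((K:ℝ) + 1) ^ 2 := by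
          rw [hsq]; exact mul_lt_mul_of_pos_right hx1 hc
      _ = 1 := by field_simp
  have h2 : ((K:ℝ) + 1) * s < 1 := by nlinarith [sq_nonneg (((K:ℝ)+1)*s + 1)]
  nlinarith

lemma caseB {M : Type*} [MetricSpace M] [Infinite M] [DiscreteTopology M] (e : M) :
    ∃ f : M → ℝ, Continuous f ∧ f e = 0 ∧ (¬ ∃ K : NNReal, LipschitzWith K f) := by
  have hinf : ({e}ᶜ : Set M).Infinite := (Set.finite_singleton e).infinite_compl
  let u := hinf.natEmbedding
  set v : ℕ → M := fun n => (u n : M) with hv_def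
  have hv_inj : Function.Injective v := fun m n h => u.injective (Subtype.ext h)
  have hv_ne : ∀ n, v n ≠ e := fun n => (u n).2
  set f : M → ℝ := Function.extend v (fun n => ((n:ℝ) + 1) * (dist (v n) e + 1)) 0 with hf_def
  have hfe : f e = 0 := by
    rw [hf_def, Function.extend_apply']
    · rfl
    · rintro ⟨n, hn⟩
      exact hv_ne n hn
  refine ⟨f, continuous_of_discreteTopology, hfe, ?_⟩
  rintro ⟨K, hK⟩
  set n := ⌈(K:ℝ)⌉₊ with hn_def
  have hfn : f (v n) = ((n:ℝ) + 1) * (dist (v n) e + 1) := hv_inj.extend_apply _ _ _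
  have h := hK.dist_le_mul (v n) e
  rw [hfn, hfe] at h
  have hd : (0:ℝ) < dist (v n) e := dist_pos.2 (hv_ne n)
  have hval : dist (((n:ℝ) + 1) * (dist (v n) e + 1)) 0 = ((n:ℝ) + 1) * (dist (v n) e + 1) := by
    rw [Real.dist_eq, sub_zero]
    exact abs_of_nonneg (by positivity)
  rw [hval] at h
  have hceil : (K:ℝ) ≤ (n:ℝ) := Nat.le_ceil _
  nlinarith

theorem stmt_10 {M : Type*} [MetricSpace M] [Infinite M] (e : M) :
    ∃ f : M → ℝ, Continuous f ∧ f e = 0 ∧ (¬ ∃ K : NNReal, LipschitzWith K f) ∧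
      f ∈ closure {g : M → ℝ | (∃ K : NNReal, LipschitzWith K g) ∧ g e = 0} := by
  by_cases h : ∀ a : M, IsOpen ({a} : Set M)
  · have : DiscreteTopology M := discreteTopology_iff_isOpen_singleton.2 h
    obtain ⟨f, hc, h0, hnl⟩ := caseB e
    exact ⟨f, hc, h0, hnl, mem_closure_of_eq_zero e f h0⟩
  · push_neg at h
    obtain ⟨a, ha⟩ := h
    obtain ⟨f, hc, h0, hnl⟩ := caseA e a ha
    exact ⟨f, hc, h0, hnl, mem_closure_of_eq_zero e f h0⟩
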